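/- Let G and Ḡ be MILP instances of size (m,n) with SB(G) ∈ ℝ^n and SB(Ḡ) ∈ ℝ^n. If G ∼₂^W Ḡ, then SB(G) = SB(Ḡ). -/

import Mathlib

open scoped BigOperators Classical
open MeasureTheory

noncomputable section

/-- Type of constraint senses: `0` is `≤`, `1` is `=`, `2` is `≥`. -/
abbrev Sense : Type := Fin 3

/-- Extended lower bounds: `Sum.inl a` is a real bound, `Sum.inr ()` is `-∞`. -/
abbrev ExtLo : Type := ℝ ⊕ Unit

/-- Extended upper bounds: `Sum.inl a` is a real bound, `Sum.inr ()` is `+∞`. -/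
abbrev ExtHi : Type := ℝ ⊕ Unit

def senseRel (s : Sense) (a b : ℝ) : Prop :=
  if s = 0 then a ≤ b else if s = 1 then a = b else b ≤ a

def loSat (lo : ExtLo) (x : ℝ) : Prop :=
  match lo with
  | Sum.inl a => a ≤ x
  | Sum.inr _ => True

def hiSat (hi : ExtHi) (x : ℝ) : Prop :=
  match hi with
  | Sum.inl a => x ≤ a
  | Sum.inr _ => True

/-- The space `𝒢_{m,n}` of MILP instances of size `(m,n)`:
`(A, b, c, ∘, l, u, I)`, with `I` encoded as a Boolean indicator vector. -/
abbrev MILP (m n : ℕ) : Type :=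
  (Fin m → Fin n → ℝ) × (Fin m → ℝ) × (Fin n → ℝ) × (Fin m → Sense) ×
  (Fin n → ExtLo) × (Fin n → ExtHi) × (Fin n → Bool)

namespace MILP

variable {m n : ℕ}

def A (G : MILP m n) : Fin m → Fin n → ℝ := G.1
def b (G : MILP m n) : Fin m → ℝ := G.2.1
def c (G : MILP m n) : Fin n → ℝ := G.2.2.1
def sense (G : MILP m n) : Fin m → Sense := G.2.2.2.1
def lo (G : MILP m n) : Fin n → ExtLo := G.2.2.2.2.1
def hi (G : MILP m n) : Fin n → ExtHi := G.2.2.2.2.2.1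
def isInt (G : MILP m n) : Fin n → Bool := G.2.2.2.2.2.2

end MILP

/-- Satisfaction of the linear constraints `(Ax) ∘ b`. -/
def consSat {m n : ℕ} (G : MILP m n) (x : Fin n → ℝ) : Prop :=
  ∀ i, senseRel (MILP.sense G i) (∑ j, MILP.A G i j * x j) (MILP.b G i)

/-- Feasible set of the LP relaxation of `G`. -/
def lpFeasSet {m n : ℕ} (G : MILP m n) : Set (Fin n → ℝ) :=
  {x | consSat G x ∧ ∀ j, loSat (MILP.lo G j) (x j) ∧ hiSat (MILP.hi G j) (x j)}

/-- Feasible set of `LP(G, j, lo', hi')`: the LP relaxation of `G` with the bound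
constraint on variable `j` replaced by `lo' ≤ x_j ≤ hi'`. -/
def feasSetMod {m n : ℕ} (G : MILP m n) (j : Fin n) (lo' : ExtLo) (hi' : ExtHi) :
    Set (Fin n → ℝ) :=
  {x | consSat G x ∧ (∀ j', j' ≠ j → loSat (MILP.lo G j') (x j') ∧ hiSat (MILP.hi G j') (x j'))
      ∧ loSat lo' (x j) ∧ hiSat hi' (x j)}

/-- Optimal value (in `ℝ ∪ {±∞}`) of the LP `min cᵀx` over `S`:
`+∞` if infeasible, `-∞` if unbounded below. -/
def lpVal {n : ℕ} (c : Fin n → ℝ) (S : Set (Fin n → ℝ)) : EReal :=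
  ⨅ x ∈ S, ((∑ j, c j * x j : ℝ) : EReal)

/-- `f*(G)`: optimal value of the LP relaxation of `G`. -/
def fstar {m n : ℕ} (G : MILP m n) : EReal := lpVal (MILP.c G) (lpFeasSet G)

/-- `f*(G, j, lo', hi')`: optimal value of `LP(G, j, lo', hi')`. -/
def lpValMod {m n : ℕ} (G : MILP m n) (j : Fin n) (lo' : ExtLo) (hi' : ExtHi) : EReal :=
  lpVal (MILP.c G) (feasSetMod G j lo' hi')

/-- The Euclidean norm on `ℝⁿ` (as `Fin n → ℝ`). -/
def euclNorm {n : ℕ} (x : Fin n → ℝ) : ℝ := Real.sqrt (∑ j, x j ^ 2)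

/-- The Euclidean distance on `ℝⁿ`. -/
def euclDist {n : ℕ} (x y : Fin n → ℝ) : ℝ := euclNorm (fun j => x j - y j)

/-- `x` is an optimal solution of the LP relaxation of `G`. -/
def IsOptSol {m n : ℕ} (G : MILP m n) (x : Fin n → ℝ) : Prop :=
  x ∈ lpFeasSet G ∧ ((∑ j, MILP.c G j * x j : ℝ) : EReal) = fstar G

/-- `x` is an optimal solution of smallest Euclidean norm of the LP relaxation of `G`. -/
def IsMinNormOpt {m n : ℕ} (G : MILP m n) (x : Fin n → ℝ) : Prop :=
  IsOptSol G x ∧ ∀ y, IsOptSol G y → euclNorm x ≤ euclNorm y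

/-- `x*(G)`: the optimal solution of smallest Euclidean norm of the LP relaxation
(defaults to `0` when it does not exist). -/
def xstar {m n : ℕ} (G : MILP m n) : Fin n → ℝ :=
  if h : ∃ x, IsMinNormOpt G x then h.choose else 0

/-- `f*(G, j, l_j, ⌊x*(G)_j⌋)`. -/
def branchDown {m n : ℕ} (G : MILP m n) (j : Fin n) : EReal :=
  lpValMod G j (MILP.lo G j) (Sum.inl ((⌊xstar G j⌋ : ℤ) : ℝ))

/-- `f*(G, j, ⌈x*(G)_j⌉, u_j)`. -/
def branchUp {m n : ℕ} (G : MILP m n) (j : Fin n) : EReal :=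
  lpValMod G j (Sum.inl ((⌈xstar G j⌉ : ℤ) : ℝ)) (MILP.hi G j)

/-- The strong branching score vector `SB(G) ∈ ℝⁿ`. -/
def SB {m n : ℕ} (G : MILP m n) : Fin n → ℝ := fun j =>
  if MILP.isInt G j then
    ((branchDown G j).toReal - (fstar G).toReal) * ((branchUp G j).toReal - (fstar G).toReal)
  else 0

/-- `SB(G) ∈ ℝⁿ`: the LP relaxation of `G` is feasible and bounded (so that the
min-norm optimal solution `x*(G)` exists and `f*(G)` is finite), and all the
branch LP values entering the strong branching scores are finite. -/
def SBRealValued {m n : ℕ} (G : MILP m n) : Prop :=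
  (∃ x, IsMinNormOpt G x) ∧ fstar G ≠ ⊤ ∧ fstar G ≠ ⊥ ∧
  ∀ j, MILP.isInt G j →
    branchDown G j ≠ ⊤ ∧ branchDown G j ≠ ⊥ ∧ branchUp G j ≠ ⊤ ∧ branchUp G j ≠ ⊥

/-! ### WL colors -/

abbrev VFeat : Type := ℝ × Sense
abbrev WFeat : Type := ℝ × ExtLo × ExtHi × Bool

/-- The pair (type of constraint-node colors, type of variable-node colors) at
each round of the WL test. -/
def WLTypes : ℕ → Type × Type
  | 0 => (VFeat, WFeat)
  | l + 1 =>
      ((WLTypes l).1 × Multiset ((WLTypes l).2 × ℝ),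
       (WLTypes l).2 × Multiset ((WLTypes l).1 × ℝ))

abbrev VColor (l : ℕ) : Type := (WLTypes l).1
abbrev WColor (l : ℕ) : Type := (WLTypes l).2

/-- The canonical WL colors of a MILP instance: `(wl G l).1 i = C_l^V(i)` and
`(wl G l).2 j = C_l^W(j)`. -/
def wl {m n : ℕ} (G : MILP m n) : (l : ℕ) → (Fin m → VColor l) × (Fin n → WColor l)
  | 0 =>
      (fun i => (MILP.b G i, MILP.sense G i),
       fun j => (MILP.c G j, MILP.lo G j, MILP.hi G j, MILP.isInt G j))
  | l + 1 =>
      (fun i => ((wl G l).1 i,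
        (Finset.univ.filter (fun j => MILP.A G i j ≠ 0)).val.map
          (fun j => ((wl G l).2 j, MILP.A G i j))),
       fun j => ((wl G l).2 j,
        (Finset.univ.filter (fun i => MILP.A G i j ≠ 0)).val.map
          (fun i => ((wl G l).1 i, MILP.A G i j))))

/-- `G` is message-passing-tractable: whenever two constraints and two variables are
respectively indistinguishable by all rounds of the WL test, the corresponding matrix
entries agree (i.e. every submatrix of `A` over a pair of classes of the stable WL
partition is constant). -/
def MPTractable {m n : ℕ} (G : MILP m n) : Prop :=
  ∀ i i' j j', (∀ l, (wl G l).1 i = (wl G l).1 i') → (∀ l, (wl G l).2 j = (wl G l).2 j') →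
    MILP.A G i j = MILP.A G i' j'

/-- `G ∼^W G2`. -/
def WLEquivW {m n : ℕ} (G G2 : MILP m n) : Prop :=
  ∀ l, Finset.univ.val.map ((wl G l).1) = Finset.univ.val.map ((wl G2 l).1)
    ∧ ∀ j, (wl G l).2 j = (wl G2 l).2 j

/-! ### MP-GNNs -/

/-- A message-passing GNN of size `(m,n)`. -/
structure MPGNN (m n : ℕ) where
  L : ℕ
  d : ℕ → ℕ
  e : ℕ → ℕ
  p0 : ℝ × Sense → (Fin (d 0) → ℝ)
  q0 : ℝ × ExtLo × ExtHi × Bool → (Fin (d 0) → ℝ)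
  f : (l : ℕ) → (Fin (d l) → ℝ) × ℝ → (Fin (e l) → ℝ)
  g : (l : ℕ) → (Fin (d l) → ℝ) × ℝ → (Fin (e l) → ℝ)
  p : (l : ℕ) → (Fin (d l) → ℝ) × (Fin (e l) → ℝ) → (Fin (d (l + 1)) → ℝ)
  q : (l : ℕ) → (Fin (d l) → ℝ) × (Fin (e l) → ℝ) → (Fin (d (l + 1)) → ℝ)
  r : (Fin (d L) → ℝ) × (Fin (d L) → ℝ) × (Fin (d L) → ℝ) → ℝ
  p0_cont : Continuous p0
  q0_cont : Continuous q0
  f_cont : ∀ l, Continuous (f l)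
  g_cont : ∀ l, Continuous (g l)
  p_cont : ∀ l, Continuous (p l)
  q_cont : ∀ l, Continuous (q l)
  r_cont : Continuous r
  f_zero : ∀ l t, f l (t, 0) = 0
  g_zero : ∀ l s, g l (s, 0) = 0

namespace MPGNN

variable {m n : ℕ}

/-- The features of an MP-GNN on input `G` after `l` layers:
`(st N G l).1 i = s_i^l` and `(st N G l).2 j = t_j^l`. -/
def st (N : MPGNN m n) (G : MILP m n) :
    (l : ℕ) → (Fin m → (Fin (N.d l) → ℝ)) × (Fin n → (Fin (N.d l) → ℝ))
  | 0 =>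
      (fun i => N.p0 (MILP.b G i, MILP.sense G i),
       fun j => N.q0 (MILP.c G j, MILP.lo G j, MILP.hi G j, MILP.isInt G j))
  | l + 1 =>
      (fun i => N.p l ((st N G l).1 i, ∑ j, N.f l ((st N G l).2 j, MILP.A G i j)),
       fun j => N.q l ((st N G l).2 j, ∑ i, N.g l ((st N G l).1 i, MILP.A G i j)))

/-- The output `F(G) ∈ ℝⁿ` of an MP-GNN. -/
def eval (N : MPGNN m n) (G : MILP m n) : Fin n → ℝ := fun j =>
  N.r (∑ i, (st N G N.L).1 i, ∑ j', (st N G N.L).2 j', (st N G N.L).2 j)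

end MPGNN

/-! ### 2-FWL colors -/

/-- The pair (type of `(V,W)`-pair colors, type of `(W,W)`-pair colors) at each
round of the 2-FWL test. -/
def FWLTypes : ℕ → Type × Type
  | 0 => (VFeat × WFeat × ℝ, WFeat × WFeat × Bool)
  | l + 1 =>
      ((FWLTypes l).1 × Multiset ((FWLTypes l).2 × (FWLTypes l).1),
       (FWLTypes l).2 × Multiset ((FWLTypes l).1 × (FWLTypes l).1))

abbrev VWColor (l : ℕ) : Type := (FWLTypes l).1
abbrev WWColor (l : ℕ) : Type := (FWLTypes l).2

/-- The canonical 2-FWL colors of a MILP instance: `(fwl G l).1 i j = C_l^{VW}(i,j)` and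
`(fwl G l).2 j₁ j₂ = C_l^{WW}(j₁,j₂)`. -/
def fwl {m n : ℕ} (G : MILP m n) :
    (l : ℕ) → (Fin m → Fin n → VWColor l) × (Fin n → Fin n → WWColor l)
  | 0 =>
      (fun i j => ((MILP.b G i, MILP.sense G i),
        (MILP.c G j, MILP.lo G j, MILP.hi G j, MILP.isInt G j), MILP.A G i j),
       fun j1 j2 => ((MILP.c G j1, MILP.lo G j1, MILP.hi G j1, MILP.isInt G j1),
        (MILP.c G j2, MILP.lo G j2, MILP.hi G j2, MILP.isInt G j2), decide (j1 = j2)))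
  | l + 1 =>
      (fun i j => ((fwl G l).1 i j,
        Finset.univ.val.map (fun j1 => ((fwl G l).2 j1 j, (fwl G l).1 i j1))),
       fun j1 j2 => ((fwl G l).2 j1 j2,
        Finset.univ.val.map (fun i => ((fwl G l).1 i j2, (fwl G l).1 i j1))))

/-- `G ∼₂ G2`. -/
def FWLEquiv {m n : ℕ} (G G2 : MILP m n) : Prop :=
  ∀ l, (Finset.univ : Finset (Fin m × Fin n)).val.map (fun p => (fwl G l).1 p.1 p.2)
        = (Finset.univ : Finset (Fin m × Fin n)).val.map (fun p => (fwl G2 l).1 p.1 p.2)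
    ∧ (Finset.univ : Finset (Fin n × Fin n)).val.map (fun p => (fwl G l).2 p.1 p.2)
        = (Finset.univ : Finset (Fin n × Fin n)).val.map (fun p => (fwl G2 l).2 p.1 p.2)

/-- `G ∼₂^W G2`. -/
def FWLEquivW {m n : ℕ} (G G2 : MILP m n) : Prop :=
  ∀ l, ∀ j, Finset.univ.val.map (fun i => (fwl G l).1 i j)
        = Finset.univ.val.map (fun i => (fwl G2 l).1 i j)
    ∧ Finset.univ.val.map (fun j1 => (fwl G l).2 j1 j)
        = Finset.univ.val.map (fun j1 => (fwl G2 l).2 j1 j)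

/-! ### 2-FGNNs -/

/-- A second-order folklore GNN of size `(m,n)`. -/
structure FGNN2 (m n : ℕ) where
  L : ℕ
  d : ℕ → ℕ
  e : ℕ → ℕ
  p0 : VFeat × WFeat × ℝ → (Fin (d 0) → ℝ)
  q0 : WFeat × WFeat × Bool → (Fin (d 0) → ℝ)
  f : (l : ℕ) → (Fin (d l) → ℝ) × (Fin (d l) → ℝ) → (Fin (e l) → ℝ)
  g : (l : ℕ) → (Fin (d l) → ℝ) × (Fin (d l) → ℝ) → (Fin (e l) → ℝ)
  p : (l : ℕ) → (Fin (d l) → ℝ) × (Fin (e l) → ℝ) → (Fin (d (l + 1)) → ℝ)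
  q : (l : ℕ) → (Fin (d l) → ℝ) × (Fin (e l) → ℝ) → (Fin (d (l + 1)) → ℝ)
  r : (Fin (d L) → ℝ) × (Fin (d L) → ℝ) → ℝ
  p0_cont : Continuous p0
  q0_cont : Continuous q0
  f_cont : ∀ l, Continuous (f l)
  g_cont : ∀ l, Continuous (g l)
  p_cont : ∀ l, Continuous (p l)
  q_cont : ∀ l, Continuous (q l)
  r_cont : Continuous r

namespace FGNN2

variable {m n : ℕ}

/-- The features of a 2-FGNN on input `G` after `l` layers:
`(st N G l).1 i j = s_{ij}^l` and `(st N G l).2 j₁ j₂ = t_{j₁j₂}^l`. -/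
def st (N : FGNN2 m n) (G : MILP m n) :
    (l : ℕ) → (Fin m → Fin n → (Fin (N.d l) → ℝ)) × (Fin n → Fin n → (Fin (N.d l) → ℝ))
  | 0 =>
      (fun i j => N.p0 ((MILP.b G i, MILP.sense G i),
        (MILP.c G j, MILP.lo G j, MILP.hi G j, MILP.isInt G j), MILP.A G i j),
       fun j1 j2 => N.q0 ((MILP.c G j1, MILP.lo G j1, MILP.hi G j1, MILP.isInt G j1),
        (MILP.c G j2, MILP.lo G j2, MILP.hi G j2, MILP.isInt G j2), decide (j1 = j2)))
  | l + 1 =>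
      (fun i j => N.p l ((st N G l).1 i j, ∑ j1, N.f l ((st N G l).2 j1 j, (st N G l).1 i j1)),
       fun j1 j2 => N.q l ((st N G l).2 j1 j2, ∑ i, N.g l ((st N G l).1 i j2, (st N G l).1 i j1)))

/-- The output `F(G) ∈ ℝⁿ` of a 2-FGNN. -/
def eval (N : FGNN2 m n) (G : MILP m n) : Fin n → ℝ := fun j =>
  N.r (∑ i, (st N G N.L).1 i j, ∑ j1, (st N G N.L).2 j1 j)

end FGNN2



lemma exists_perm_of_map_eq {α β : Type*} [Fintype α] (f g : α → β)
    (h : Finset.univ.val.map f = Finset.univ.val.map g) :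
    ∃ σ : Equiv.Perm α, ∀ a, f (σ a) = g a := by
  classical
  have hcard : ∀ b : β, Fintype.card {a // g a = b} = Fintype.card {a // f a = b} := by
    intro b
    have hc := congrArg (Multiset.count b) h
    rw [Multiset.count_map, Multiset.count_map] at hc
    rw [Fintype.card_subtype, Fintype.card_subtype]
    simp only [Finset.card, Finset.filter_val]
    simpa [eq_comm] using hc.symm
  let e : ∀ b, {a // g a = b} ≃ {a // f a = b} := fun b => Fintype.equivOfCardEq (hcard b)
  refine ⟨((Equiv.sigmaFiberEquiv g).symm.trans
      (Equiv.sigmaCongrRight e)).trans (Equiv.sigmaFiberEquiv f), fun a => ?_⟩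
  exact (e (g a) ⟨a, rfl⟩).2

lemma exists_forall_of_antitone {γ : Type*} [Fintype γ] (P : ℕ → γ → Prop)
    (hmono : ∀ l x, P (l+1) x → P l x) (hne : ∀ l, ∃ x, P l x) :
    ∃ x, ∀ l, P l x := by
  classical
  let S : ℕ → Finset γ := fun l => Finset.univ.filter (P l)
  have hmem : ∀ l x, x ∈ S l ↔ P l x := by intro l x; simp [S]
  have hmono' : ∀ l, S (l+1) ⊆ S l := by
    intro l x hx; rw [hmem] at *; exact hmono l x hx
  have hanti : ∀ l d, S (l + d) ⊆ S l := by
    intro l d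
    induction d with
    | zero => exact subset_rfl
    | succ d ih => exact (hmono' (l + d)).trans ih
  have hrange : (Set.range fun l => (S l).card).Nonempty := ⟨_, ⟨0, rfl⟩⟩
  obtain ⟨l0, hl0⟩ := Nat.sInf_mem hrange
  have hmin : ∀ l, (S l0).card ≤ (S l).card := by
    intro l; simp only [] at hl0; rw [hl0]; exact Nat.sInf_le ⟨l, rfl⟩
  obtain ⟨x, hx⟩ : (S l0).Nonempty := by
    obtain ⟨x, hx⟩ := hne l0; exact ⟨x, (hmem l0 x).2 hx⟩
  refine ⟨x, fun l => ?_⟩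
  rcases le_total l l0 with hl | hl
  · have h1 := hanti l (l0 - l)
    rw [Nat.add_sub_cancel' hl] at h1
    exact (hmem l x).1 (h1 hx)
  · have h1 := hanti l0 (l - l0)
    rw [Nat.add_sub_cancel' hl] at h1
    have h2 : S l = S l0 := Finset.eq_of_subset_of_card_le h1 (hmin l)
    exact (hmem l x).1 (h2 ▸ hx)

lemma exists_perm_levelwise {α : Type*} [Fintype α] {β : ℕ → Type*}
    (f g : (l : ℕ) → α → β l) (proj : (l : ℕ) → β (l+1) → β l)
    (hf : ∀ l a, proj l (f (l+1) a) = f l a) (hg : ∀ l a, proj l (g (l+1) a) = g l a)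
    (h : ∀ l, Finset.univ.val.map (f l) = Finset.univ.val.map (g l)) :
    ∃ σ : Equiv.Perm α, ∀ l a, f l (σ a) = g l a := by
  obtain ⟨σ, hσ⟩ := exists_forall_of_antitone (fun l (σ : Equiv.Perm α) => ∀ a, f l (σ a) = g l a)
    (fun l σ hσ a => by rw [← hf l (σ a), hσ a, hg l a])
    (fun l => exists_perm_of_map_eq (f l) (g l) (h l))
  exact ⟨σ, fun l a => hσ l a⟩

section FWLAux

variable {m n : ℕ}

lemma fwl_succ_vw (G : MILP m n) (l : ℕ) (i : Fin m) (j : Fin n) :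
    (fwl G (l+1)).1 i j = ((fwl G l).1 i j,
      Finset.univ.val.map (fun j1 => ((fwl G l).2 j1 j, (fwl G l).1 i j1))) := rfl

lemma fwl_succ_ww (G : MILP m n) (l : ℕ) (j1 j2 : Fin n) :
    (fwl G (l+1)).2 j1 j2 = ((fwl G l).2 j1 j2,
      Finset.univ.val.map (fun i => ((fwl G l).1 i j2, (fwl G l).1 i j1))) := rfl

lemma fwl_zero_vw (G : MILP m n) (i : Fin m) (j : Fin n) :
    (fwl G 0).1 i j = ((MILP.b G i, MILP.sense G i),
      (MILP.c G j, MILP.lo G j, MILP.hi G j, MILP.isInt G j), MILP.A G i j) := rfl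

lemma fwl_zero_ww (G : MILP m n) (j1 j2 : Fin n) :
    (fwl G 0).2 j1 j2 = ((MILP.c G j1, MILP.lo G j1, MILP.hi G j1, MILP.isInt G j1),
      (MILP.c G j2, MILP.lo G j2, MILP.hi G j2, MILP.isInt G j2), decide (j1 = j2)) := rfl

end FWLAux

section Extract

variable {m n : ℕ}

lemma ww0_info {G H : MILP m n} {k k' j : Fin n}
    (hc : (fwl G 0).2 k j = (fwl H 0).2 k' j) :
    MILP.c G k = MILP.c H k' ∧ MILP.lo G k = MILP.lo H k' ∧ MILP.hi G k = MILP.hi H k' ∧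
      MILP.isInt G k = MILP.isInt H k' ∧ (k = j ↔ k' = j) := by
  rw [fwl_zero_ww, fwl_zero_ww] at hc
  have h1 := congrArg Prod.fst hc
  have h2 := congrArg (fun p => p.2.2) hc
  simp only [Prod.mk.injEq] at h1
  exact ⟨h1.1, h1.2.1, h1.2.2.1, h1.2.2.2, decide_eq_decide.mp h2⟩

lemma vw0_info {G H : MILP m n} {i i2 : Fin m} {k k' : Fin n}
    (hv : (fwl G 0).1 i k = (fwl H 0).1 i2 k') :
    MILP.b G i = MILP.b H i2 ∧ MILP.sense G i = MILP.sense H i2 ∧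
      MILP.A G i k = MILP.A H i2 k' := by
  rw [fwl_zero_vw, fwl_zero_vw] at hv
  have h1 := congrArg Prod.fst hv
  have h2 := congrArg (fun p => p.2.2) hv
  simp only [Prod.mk.injEq] at h1
  exact ⟨h1.1, h1.2, h2⟩

/-- Row transfer: equal anchored VW colors at all levels yield a column permutation. -/
lemma exists_colPerm_of_row {G H : MILP m n} {j : Fin n} {i i2 : Fin m}
    (hr : ∀ l, (fwl G l).1 i j = (fwl H l).1 i2 j) :
    ∃ σ : Equiv.Perm (Fin n), ∀ k l,
      (fwl H l).2 (σ k) j = (fwl G l).2 k j ∧ (fwl H l).1 i2 (σ k) = (fwl G l).1 i k := by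
  obtain ⟨σ, hσ⟩ := exists_perm_levelwise
    (f := fun l k => ((fwl H l).2 k j, (fwl H l).1 i2 k))
    (g := fun l k => ((fwl G l).2 k j, (fwl G l).1 i k))
    (proj := fun l p => (p.1.1, p.2.1)) (fun l a => rfl) (fun l a => rfl)
    (by
      intro l
      have := hr (l+1)
      rw [fwl_succ_vw, fwl_succ_vw] at this
      exact (Prod.mk.inj this).2.symm)
  exact ⟨σ, fun k l => ⟨congrArg Prod.fst (hσ l k), congrArg Prod.snd (hσ l k)⟩⟩

/-- Column transfer: equal anchored WW colors at all levels yield a row permutation. -/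
lemma exists_rowPerm_of_col {G H : MILP m n} {j : Fin n} {k k' : Fin n}
    (hc : ∀ l, (fwl G l).2 k j = (fwl H l).2 k' j) :
    ∃ τ : Equiv.Perm (Fin m), ∀ i l,
      (fwl H l).1 (τ i) j = (fwl G l).1 i j ∧ (fwl H l).1 (τ i) k' = (fwl G l).1 i k := by
  obtain ⟨τ, hτ⟩ := exists_perm_levelwise
    (f := fun l i => ((fwl H l).1 i j, (fwl H l).1 i k'))
    (g := fun l i => ((fwl G l).1 i j, (fwl G l).1 i k))
    (proj := fun l p => (p.1.1, p.2.1)) (fun l a => rfl) (fun l a => rfl)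
    (by
      intro l
      have := hc (l+1)
      rw [fwl_succ_ww, fwl_succ_ww] at this
      exact (Prod.mk.inj this).2.symm)
  exact ⟨τ, fun i l => ⟨congrArg Prod.fst (hτ l i), congrArg Prod.snd (hτ l i)⟩⟩

/-- Global row permutation from `FWLEquivW`. -/
lemma exists_rowPerm_global {G H : MILP m n} (j : Fin n) (hE : FWLEquivW G H) :
    ∃ τ : Equiv.Perm (Fin m), ∀ i l, (fwl H l).1 (τ i) j = (fwl G l).1 i j := by
  obtain ⟨τ, hτ⟩ := exists_perm_levelwise
    (f := fun l i => (fwl H l).1 i j) (g := fun l i => (fwl G l).1 i j)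
    (proj := fun l p => p.1) (fun l a => rfl) (fun l a => rfl)
    (fun l => ((hE l j).1).symm)
  exact ⟨τ, fun i l => hτ l i⟩

/-- Global column permutation from `FWLEquivW`. -/
lemma exists_colPerm_global {G H : MILP m n} (j : Fin n) (hE : FWLEquivW G H) :
    ∃ σ : Equiv.Perm (Fin n), ∀ k l, (fwl H l).2 (σ k) j = (fwl G l).2 k j := by
  obtain ⟨σ, hσ⟩ := exists_perm_levelwise
    (f := fun l k => (fwl H l).2 k j) (g := fun l k => (fwl G l).2 k j)
    (proj := fun l p => p.1) (fun l a => rfl) (fun l a => rfl)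
    (fun l => ((hE l j).2).symm)
  exact ⟨σ, fun k l => hσ l k⟩

end Extract

section Transfer

variable {m n : ℕ}

/-- The class of columns of `G` whose anchored (at `j`) 2-FWL colors match those of
column `j2` of `H`, at every level. -/
def fib (G H : MILP m n) (j j2 : Fin n) : Finset (Fin n) :=
  Finset.univ.filter (fun k => ∀ l, (fwl G l).2 k j = (fwl H l).2 j2 j)

/-- The class-averaged vector. -/
def yavg (G H : MILP m n) (j : Fin n) (x : Fin n → ℝ) (j2 : Fin n) : ℝ :=
  (∑ k ∈ fib G H j j2, x k) / (fib G H j j2).card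

/-- The class of rows of `G` with the same anchored colors as row `i0`. -/
def rowCls (G : MILP m n) (j : Fin n) (i0 : Fin m) : Finset (Fin m) :=
  Finset.univ.filter (fun i' => ∀ l, (fwl G l).1 i' j = (fwl G l).1 i0 j)

lemma mem_fib {G H : MILP m n} {j j2 k : Fin n} :
    k ∈ fib G H j j2 ↔ ∀ l, (fwl G l).2 k j = (fwl H l).2 j2 j := by
  simp [fib]

lemma mem_rowCls {G : MILP m n} {j : Fin n} {i0 i : Fin m} :
    i ∈ rowCls G j i0 ↔ ∀ l, (fwl G l).1 i j = (fwl G l).1 i0 j := by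
  simp [rowCls]

lemma self_mem_fib {G : MILP m n} {j k : Fin n} : k ∈ fib G G j k :=
  mem_fib.2 fun _ => rfl

lemma fib_card_pos {G : MILP m n} (j k : Fin n) : 0 < (fib G G j k).card :=
  Finset.card_pos.2 ⟨k, self_mem_fib⟩

lemma self_mem_rowCls {G : MILP m n} {j : Fin n} {i : Fin m} : i ∈ rowCls G j i :=
  mem_rowCls.2 fun _ => rfl

lemma rowCls_card_pos {G : MILP m n} (j : Fin n) (i : Fin m) : 0 < (rowCls G j i).card :=
  Finset.card_pos.2 ⟨i, self_mem_rowCls⟩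

lemma fib_congr {G H : MILP m n} {j j2 k : Fin n}
    (h : ∀ l, (fwl H l).2 j2 j = (fwl G l).2 k j) : fib G H j j2 = fib G G j k := by
  ext a
  simp only [mem_fib]
  constructor
  · intro ha l; rw [ha l, h l]
  · intro ha l; rw [ha l, ← h l]

/-- Row sums of `A` over a column class depend only on the anchored row color. -/
lemma sum_fib_A_row_eq {G : MILP m n} {j : Fin n} {i i' : Fin m}
    (hr : ∀ l, (fwl G l).1 i j = (fwl G l).1 i' j) (k0 : Fin n) :
    ∑ k ∈ fib G G j k0, MILP.A G i k = ∑ k ∈ fib G G j k0, MILP.A G i' k := by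
  obtain ⟨σ, hσ⟩ := exists_colPerm_of_row (G := G) (H := G) hr
  refine Finset.sum_equiv σ (fun k => ?_) (fun k _ => ?_)
  · simp only [mem_fib]
    constructor
    · intro ha l; rw [(hσ k l).1, ha l]
    · intro ha l; rw [← (hσ k l).1]; exact ha l
  · exact ((vw0_info (hσ k 0).2).2.2).symm

/-- Column sums of `A` over a row class depend only on the anchored column color. -/
lemma sum_rowCls_A_col_eq {G : MILP m n} {j : Fin n} {k k' : Fin n}
    (hc : ∀ l, (fwl G l).2 k j = (fwl G l).2 k' j) (i0 : Fin m) :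
    ∑ i ∈ rowCls G j i0, MILP.A G i k = ∑ i ∈ rowCls G j i0, MILP.A G i k' := by
  obtain ⟨τ, hτ⟩ := exists_rowPerm_of_col (G := G) (H := G) hc
  refine Finset.sum_equiv τ (fun i => ?_) (fun i _ => ?_)
  · simp only [mem_rowCls]
    constructor
    · intro ha l; rw [(hτ i l).1, ha l]
    · intro ha l; rw [← (hτ i l).1]; exact ha l
  · exact ((vw0_info (hτ i 0).2).2.2).symm

/-- The key summation-by-classes identity. -/
lemma sum_mul_yavg (G : MILP m n) (j : Fin n) (x w : Fin n → ℝ) :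
    ∑ k, w k * yavg G G j x k
      = ∑ k', x k' * ((∑ k ∈ fib G G j k', w k) / (fib G G j k').card) := by
  have step1 : ∀ k : Fin n, w k * yavg G G j x k
      = ∑ k' : Fin n, if (∀ l, (fwl G l).2 k' j = (fwl G l).2 k j)
          then w k * x k' / (fib G G j k).card else 0 := by
    intro k
    rw [yavg, ← mul_div_assoc, Finset.mul_sum, Finset.sum_div, ← Finset.sum_filter]
    rfl
  calc ∑ k, w k * yavg G G j x k
      = ∑ k : Fin n, ∑ k' : Fin n, if (∀ l, (fwl G l).2 k' j = (fwl G l).2 k j)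
          then w k * x k' / (fib G G j k).card else 0 := Finset.sum_congr rfl fun k _ => step1 k
    _ = ∑ k' : Fin n, ∑ k : Fin n, if (∀ l, (fwl G l).2 k' j = (fwl G l).2 k j)
          then w k * x k' / (fib G G j k).card else 0 := Finset.sum_comm
    _ = ∑ k' : Fin n, ∑ k : Fin n, if (∀ l, (fwl G l).2 k j = (fwl G l).2 k' j)
          then x k' * w k / (fib G G j k').card else 0 := by
        refine Finset.sum_congr rfl fun k' _ => Finset.sum_congr rfl fun k _ => ?_
        by_cases h : ∀ l, (fwl G l).2 k' j = (fwl G l).2 k j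
        · rw [if_pos h, if_pos fun l => (h l).symm,
            fib_congr (G := G) (H := G) fun l => (h l).symm, mul_comm (w k) (x k')]
        · rw [if_neg h, if_neg fun h' => h fun l => (h' l).symm]
    _ = ∑ k' : Fin n, x k' * ((∑ k ∈ fib G G j k', w k) / (fib G G j k').card) := by
        refine Finset.sum_congr rfl fun k' _ => ?_
        rw [← mul_div_assoc, Finset.mul_sum, Finset.sum_div, ← Finset.sum_filter]
        rfl

lemma c_const_on_fib {G H : MILP m n} {j j2 k : Fin n} (hk : k ∈ fib G H j j2) :
    MILP.c G k = MILP.c H j2 :=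
  (ww0_info (mem_fib.1 hk 0)).1

/-- Objective invariance under class averaging. -/
lemma sum_c_yavg (G : MILP m n) (j : Fin n) (x : Fin n → ℝ) :
    ∑ k, MILP.c G k * yavg G G j x k = ∑ k, MILP.c G k * x k := by
  rw [sum_mul_yavg]
  refine Finset.sum_congr rfl fun k' _ => ?_
  have hsum : ∑ k ∈ fib G G j k', MILP.c G k = (fib G G j k').card * MILP.c G k' := by
    rw [Finset.sum_congr rfl fun k hk => c_const_on_fib hk, Finset.sum_const, nsmul_eq_mul]
  have hne : ((fib G G j k').card : ℝ) ≠ 0 := Nat.cast_ne_zero.2 (fib_card_pos j k').ne'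
  rw [hsum]
  field_simp

lemma yavg_const_on_cls {G : MILP m n} {j k k' : Fin n}
    (h : ∀ l, (fwl G l).2 k j = (fwl G l).2 k' j) (x : Fin n → ℝ) :
    yavg G G j x k = yavg G G j x k' := by
  rw [yavg, yavg, fib_congr (G := G) (H := G) h]

/-- Norm contraction under class averaging. -/
lemma sum_sq_yavg_le (G : MILP m n) (j : Fin n) (x : Fin n → ℝ) :
    ∑ k, yavg G G j x k ^ 2 ≤ ∑ k, x k ^ 2 := by
  have h1 : ∑ k, yavg G G j x k * yavg G G j x k = ∑ k, x k * yavg G G j x k := by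
    rw [sum_mul_yavg]
    refine Finset.sum_congr rfl fun k' _ => ?_
    have hsum : ∑ k ∈ fib G G j k', yavg G G j x k = (fib G G j k').card * yavg G G j x k' := by
      rw [Finset.sum_congr rfl fun k hk => yavg_const_on_cls (mem_fib.1 hk) x,
        Finset.sum_const, nsmul_eq_mul]
    have hne : ((fib G G j k').card : ℝ) ≠ 0 := Nat.cast_ne_zero.2 (fib_card_pos j k').ne'
    rw [hsum]
    field_simp
  have hcs := Finset.sum_mul_sq_le_sq_mul_sq Finset.univ x (yavg G G j x)
  have hy : ∑ k, yavg G G j x k ^ 2 = ∑ k, x k * yavg G G j x k := by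
    rw [← h1]; exact Finset.sum_congr rfl fun k _ => (sq (yavg G G j x k)) ▸ rfl
  have hynn : (0:ℝ) ≤ ∑ k, yavg G G j x k ^ 2 := Finset.sum_nonneg fun k _ => sq_nonneg _
  have hxnn : (0:ℝ) ≤ ∑ k, x k ^ 2 := Finset.sum_nonneg fun k _ => sq_nonneg _
  nlinarith [hcs, hy, hynn, hxnn]

end Transfer

section AvgSat

variable {ι : Type*}

lemma senseRel_avg (s : Sense) (b : ℝ) (I : Finset ι) (hI : I.Nonempty)
    (v : ι → ℝ) (h : ∀ i ∈ I, senseRel s (v i) b) :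
    senseRel s ((∑ i ∈ I, v i) / I.card) b := by
  have hpos : (0:ℝ) < I.card := by exact_mod_cast Finset.card_pos.2 hI
  by_cases h0 : s = 0
  · simp only [senseRel, if_pos h0] at h ⊢
    rw [div_le_iff₀ hpos]
    calc ∑ i ∈ I, v i ≤ ∑ _i ∈ I, b := Finset.sum_le_sum h
    _ = b * I.card := by rw [Finset.sum_const, nsmul_eq_mul, mul_comm]
  · by_cases h1 : s = 1
    · simp only [senseRel, if_neg h0, if_pos h1] at h ⊢
      rw [div_eq_iff hpos.ne']
      calc ∑ i ∈ I, v i = ∑ _i ∈ I, b := Finset.sum_congr rfl h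
      _ = b * I.card := by rw [Finset.sum_const, nsmul_eq_mul, mul_comm]
    · simp only [senseRel, if_neg h0, if_neg h1] at h ⊢
      rw [le_div_iff₀ hpos]
      calc b * I.card = ∑ _i ∈ I, b := by rw [Finset.sum_const, nsmul_eq_mul, mul_comm]
      _ ≤ ∑ i ∈ I, v i := Finset.sum_le_sum h

lemma loSat_avg (L : ExtLo) (I : Finset ι) (hI : I.Nonempty) (v : ι → ℝ)
    (h : ∀ i ∈ I, loSat L (v i)) : loSat L ((∑ i ∈ I, v i) / I.card) := by
  cases L with
  | inl a =>
    have hpos : (0:ℝ) < I.card := by exact_mod_cast Finset.card_pos.2 hI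
    show a ≤ _
    rw [le_div_iff₀ hpos]
    calc a * I.card = ∑ _i ∈ I, a := by rw [Finset.sum_const, nsmul_eq_mul, mul_comm]
    _ ≤ ∑ i ∈ I, v i := Finset.sum_le_sum h
  | inr u => trivial

lemma hiSat_avg (U : ExtHi) (I : Finset ι) (hI : I.Nonempty) (v : ι → ℝ)
    (h : ∀ i ∈ I, hiSat U (v i)) : hiSat U ((∑ i ∈ I, v i) / I.card) := by
  cases U with
  | inl a =>
    have hpos : (0:ℝ) < I.card := by exact_mod_cast Finset.card_pos.2 hI
    show _ ≤ a
    rw [div_le_iff₀ hpos]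
    calc ∑ i ∈ I, v i ≤ ∑ _i ∈ I, a := Finset.sum_le_sum h
    _ = a * I.card := by rw [Finset.sum_const, nsmul_eq_mul, mul_comm]
  | inr u => trivial

end AvgSat

section Cross

variable {m n : ℕ} {G H : MILP m n} {j : Fin n}

lemma ccj_eq (hE : FWLEquivW G H) : ∀ l, (fwl G l).2 j j = (fwl H l).2 j j := by
  obtain ⟨σ, hσ⟩ := exists_colPerm_global j hE
  have hj : σ j = j := by
    have h0 := hσ j 0
    exact ((ww0_info h0).2.2.2.2).2 rfl
  intro l
  have := hσ j l
  rw [hj] at this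
  exact this.symm

lemma fib_nonempty (hE : FWLEquivW G H) (j2 : Fin n) : (fib G H j j2).Nonempty := by
  obtain ⟨σ, hσ⟩ := exists_colPerm_global j hE
  refine ⟨σ.symm j2, mem_fib.2 fun l => ?_⟩
  have := hσ (σ.symm j2) l
  rw [Equiv.apply_symm_apply] at this
  exact this.symm

lemma fib_anchor (hE : FWLEquivW G H) : fib G H j j = {j} := by
  ext k
  simp only [mem_fib, Finset.mem_singleton]
  constructor
  · intro ha
    have h0 : (fwl G 0).2 k j = (fwl G 0).2 j j := by rw [ha 0, ← ccj_eq hE 0]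
    exact ((ww0_info h0).2.2.2.2).2 rfl
  · rintro rfl
    exact ccj_eq hE

lemma yavg_apply_anchor (hE : FWLEquivW G H) (x : Fin n → ℝ) : yavg G H j x j = x j := by
  rw [yavg, fib_anchor hE]
  simp

lemma ne_anchor_of_mem_fib {j2 k : Fin n} (hk : k ∈ fib G H j j2) (hj2 : j2 ≠ j) : k ≠ j :=
  fun hkj => hj2 (((ww0_info (mem_fib.1 hk 0)).2.2.2.2).1 hkj)

lemma sum_c_yavg_cross (hE : FWLEquivW G H) (x : Fin n → ℝ) :
    ∑ k, MILP.c H k * yavg G H j x k = ∑ k, MILP.c G k * x k := by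
  obtain ⟨σ, hσ⟩ := exists_colPerm_global j hE
  have h1 : ∑ k, MILP.c G k * yavg G G j x k = ∑ k, MILP.c H k * yavg G H j x k := by
    refine Fintype.sum_equiv σ _ _ fun k => ?_
    rw [(ww0_info (hσ k 0)).1, yavg, yavg, fib_congr fun l => hσ k l]
  rw [← h1, sum_c_yavg]

lemma sum_sq_yavg_cross (hE : FWLEquivW G H) (x : Fin n → ℝ) :
    ∑ k, yavg G H j x k ^ 2 ≤ ∑ k, x k ^ 2 := by
  obtain ⟨σ, hσ⟩ := exists_colPerm_global j hE
  have h1 : ∑ k, yavg G G j x k ^ 2 = ∑ k, yavg G H j x k ^ 2 := by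
    refine Fintype.sum_equiv σ _ _ fun k => ?_
    rw [yavg, yavg, fib_congr fun l => hσ k l]
  rw [← h1]
  exact sum_sq_yavg_le G j x

lemma consSat_yavg (hE : FWLEquivW G H) {x : Fin n → ℝ} (hx : consSat G x) :
    consSat H (yavg G H j x) := by
  intro i2
  obtain ⟨τ, hτ⟩ := exists_rowPerm_global j hE
  set i := τ.symm i2 with hi
  have hri : ∀ l, (fwl G l).1 i j = (fwl H l).1 i2 j := by
    intro l
    have := hτ (τ.symm i2) l
    rw [Equiv.apply_symm_apply] at this
    exact this.symm
  obtain ⟨σ, hσ⟩ := exists_colPerm_of_row hri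
  set I := rowCls G j i with hI
  have hIne : I.Nonempty := ⟨i, self_mem_rowCls⟩
  have hcI : (0:ℝ) < I.card := by exact_mod_cast Finset.card_pos.2 hIne
  -- Step 1: reindex the H-sum by σ
  have step1 : ∑ j2, MILP.A H i2 j2 * yavg G H j x j2
      = ∑ k, MILP.A G i k * yavg G G j x k := by
    refine (Fintype.sum_equiv σ _ _ fun k => ?_).symm
    rw [(vw0_info (hσ k 0).2).2.2, yavg, yavg, fib_congr fun l => (hσ k l).1]
  -- Step 2: this equals the rowCls-average of the G-constraint values
  have step2 : ∑ k, MILP.A G i k * yavg G G j x k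
      = (∑ i' ∈ I, ∑ k, MILP.A G i' k * x k) / I.card := by
    rw [sum_mul_yavg, Finset.sum_comm, Finset.sum_div]
    refine Finset.sum_congr rfl fun k' _ => ?_
    have hNk : (0:ℝ) < (fib G G j k').card := by exact_mod_cast fib_card_pos j k'
    have key : (∑ k ∈ fib G G j k', MILP.A G i k) * I.card
        = (∑ i' ∈ I, MILP.A G i' k') * (fib G G j k').card := by
      have e1 : ∑ i' ∈ I, ∑ k ∈ fib G G j k', MILP.A G i' k
          = ∑ i' ∈ I, ∑ k ∈ fib G G j k', MILP.A G i k :=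
        Finset.sum_congr rfl fun i' hi' => sum_fib_A_row_eq (mem_rowCls.1 hi') k'
      have e2 : ∑ _i' ∈ I, ∑ k ∈ fib G G j k', MILP.A G i k
          = (∑ k ∈ fib G G j k', MILP.A G i k) * I.card := by
        rw [Finset.sum_const, nsmul_eq_mul, mul_comm]
      have e3 : ∑ k ∈ fib G G j k', ∑ i' ∈ I, MILP.A G i' k
          = ∑ k ∈ fib G G j k', ∑ i' ∈ I, MILP.A G i' k' :=
        Finset.sum_congr rfl fun k hk => sum_rowCls_A_col_eq (mem_fib.1 hk) i
      have e4 : ∑ _k ∈ fib G G j k', ∑ i' ∈ I, MILP.A G i' k'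
          = (∑ i' ∈ I, MILP.A G i' k') * (fib G G j k').card := by
        rw [Finset.sum_const, nsmul_eq_mul, mul_comm]
      calc (∑ k ∈ fib G G j k', MILP.A G i k) * (I.card : ℝ)
          = ∑ _i' ∈ I, ∑ k ∈ fib G G j k', MILP.A G i k := e2.symm
        _ = ∑ i' ∈ I, ∑ k ∈ fib G G j k', MILP.A G i' k := e1.symm
        _ = ∑ k ∈ fib G G j k', ∑ i' ∈ I, MILP.A G i' k := Finset.sum_comm
        _ = ∑ _k ∈ fib G G j k', ∑ i' ∈ I, MILP.A G i' k' := e3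
        _ = (∑ i' ∈ I, MILP.A G i' k') * (fib G G j k').card := e4
    have hdiv : (∑ k ∈ fib G G j k', MILP.A G i k) / (fib G G j k').card
        = (∑ i' ∈ I, MILP.A G i' k') / I.card := by
      rw [div_eq_div_iff hNk.ne' hcI.ne']
      exact key
    rw [hdiv, ← Finset.sum_mul]
    ring
  -- put together with sense relations
  have hsb : MILP.b G i = MILP.b H i2 ∧ MILP.sense G i = MILP.sense H i2 :=
    ⟨(vw0_info (hri 0)).1, (vw0_info (hri 0)).2.1⟩
  rw [step1, step2, ← hsb.1, ← hsb.2]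
  refine senseRel_avg _ _ I hIne _ fun i' hi' => ?_
  have h0 := vw0_info (mem_rowCls.1 hi' 0)
  have hxi := hx i'
  rw [h0.1, h0.2.1] at hxi
  exact hxi

lemma yavg_mem_feasSetMod (hE : FWLEquivW G H) (lo' : ExtLo) (hi' : ExtHi)
    {x : Fin n → ℝ} (hx : x ∈ feasSetMod G j lo' hi') :
    yavg G H j x ∈ feasSetMod H j lo' hi' := by
  obtain ⟨hcons, hbnd, hlo, hhi⟩ := hx
  refine ⟨consSat_yavg hE hcons, fun j2 hj2 => ?_, ?_, ?_⟩
  · constructor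
    · refine loSat_avg _ _ (fib_nonempty hE j2) _ fun k hk => ?_
      rw [← (ww0_info (mem_fib.1 hk 0)).2.1]
      exact (hbnd k (ne_anchor_of_mem_fib hk hj2)).1
    · refine hiSat_avg _ _ (fib_nonempty hE j2) _ fun k hk => ?_
      rw [← (ww0_info (mem_fib.1 hk 0)).2.2.1]
      exact (hbnd k (ne_anchor_of_mem_fib hk hj2)).2
  · rw [yavg_apply_anchor hE]; exact hlo
  · rw [yavg_apply_anchor hE]; exact hhi

end Cross

section Values

variable {m n : ℕ}

lemma FWLEquivW.symm {G H : MILP m n} (hE : FWLEquivW G H) : FWLEquivW H G :=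
  fun l j => ⟨(hE l j).1.symm, (hE l j).2.symm⟩

lemma lpVal_le_of_map {c1 c2 : Fin n → ℝ} {S1 S2 : Set (Fin n → ℝ)}
    (hmap : ∀ x ∈ S1, ∃ x2 ∈ S2, (∑ k, c2 k * x2 k) = ∑ k, c1 k * x k) :
    lpVal c2 S2 ≤ lpVal c1 S1 := by
  refine le_iInf₂ fun x hx => ?_
  obtain ⟨x2, hx2, hval⟩ := hmap x hx
  have h2 : lpVal c2 S2 ≤ ((∑ k, c2 k * x2 k : ℝ) : EReal) := iInf₂_le x2 hx2
  rwa [hval] at h2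

lemma lpValMod_eq {G H : MILP m n} {j : Fin n} (hE : FWLEquivW G H)
    (lo' : ExtLo) (hi' : ExtHi) : lpValMod G j lo' hi' = lpValMod H j lo' hi' := by
  refine le_antisymm ?_ ?_
  · exact lpVal_le_of_map fun x hx =>
      ⟨yavg H G j x, yavg_mem_feasSetMod hE.symm lo' hi' hx, sum_c_yavg_cross hE.symm x⟩
  · exact lpVal_le_of_map fun x hx =>
      ⟨yavg G H j x, yavg_mem_feasSetMod hE lo' hi' hx, sum_c_yavg_cross hE x⟩

lemma feasSetMod_self (G : MILP m n) (j : Fin n) :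
    feasSetMod G j (MILP.lo G j) (MILP.hi G j) = lpFeasSet G := by
  ext x
  constructor
  · rintro ⟨hc, hb, hl, hh⟩
    refine ⟨hc, fun j' => ?_⟩
    by_cases hj : j' = j
    · subst hj; exact ⟨hl, hh⟩
    · exact hb j' hj
  · rintro ⟨hc, hb⟩
    exact ⟨hc, fun j' _ => hb j', (hb j).1, (hb j).2⟩

lemma lohij_eq {G H : MILP m n} {j : Fin n} (hE : FWLEquivW G H) :
    MILP.c G j = MILP.c H j ∧ MILP.lo G j = MILP.lo H j ∧ MILP.hi G j = MILP.hi H j ∧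
      MILP.isInt G j = MILP.isInt H j := by
  have h0 := ww0_info (ccj_eq (j := j) hE 0)
  exact ⟨h0.1, h0.2.1, h0.2.2.1, h0.2.2.2.1⟩

lemma fstar_eq {G H : MILP m n} (j : Fin n) (hE : FWLEquivW G H) : fstar G = fstar H := by
  have h1 := lpValMod_eq (j := j) hE (MILP.lo G j) (MILP.hi G j)
  rw [lpValMod, lpValMod, feasSetMod_self, (lohij_eq hE).2.1, (lohij_eq hE).2.2.1,
    feasSetMod_self] at h1
  exact h1

lemma isOptSol_yavg {G H : MILP m n} {j : Fin n} (hE : FWLEquivW G H)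
    {x : Fin n → ℝ} (hx : IsOptSol G x) : IsOptSol H (yavg G H j x) := by
  obtain ⟨hfeas, hval⟩ := hx
  have hmem : yavg G H j x ∈ lpFeasSet H := by
    have h2 := yavg_mem_feasSetMod hE (MILP.lo G j) (MILP.hi G j) (x := x)
      (by rw [feasSetMod_self]; exact hfeas)
    rwa [(lohij_eq hE).2.1, (lohij_eq hE).2.2.1, feasSetMod_self] at h2
  refine ⟨hmem, ?_⟩
  rw [show (∑ k, MILP.c H k * yavg G H j x k) = ∑ k, MILP.c G k * x k from
    sum_c_yavg_cross hE x, hval]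
  exact fstar_eq j hE

lemma loSat_mid {L : ExtLo} {a b : ℝ} (ha : loSat L a) (hb : loSat L b) :
    loSat L ((a + b) / 2) := by
  cases L with
  | inl c =>
    have h1 : c ≤ a := ha
    have h2 : c ≤ b := hb
    show c ≤ _
    linarith
  | inr _ => trivial

lemma hiSat_mid {U : ExtHi} {a b : ℝ} (ha : hiSat U a) (hb : hiSat U b) :
    hiSat U ((a + b) / 2) := by
  cases U with
  | inl c =>
    have h1 : a ≤ c := ha
    have h2 : b ≤ c := hb
    show _ ≤ c
    linarith
  | inr _ => trivial

lemma isOptSol_midpoint {G : MILP m n} {x y : Fin n → ℝ}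
    (hx : IsOptSol G x) (hy : IsOptSol G y) : IsOptSol G (fun k => (x k + y k) / 2) := by
  obtain ⟨⟨hxc, hxb⟩, hxv⟩ := hx
  obtain ⟨⟨hyc, hyb⟩, hyv⟩ := hy
  have hsum : ∀ c : Fin n → ℝ, ∑ k, c k * ((x k + y k) / 2)
      = ((∑ k, c k * x k) + ∑ k, c k * y k) / 2 := by
    intro c
    rw [← Finset.sum_add_distrib, Finset.sum_div]
    exact Finset.sum_congr rfl fun k _ => by ring
  have hvxy : (∑ k, MILP.c G k * x k) = ∑ k, MILP.c G k * y k := by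
    have h2 := hxv.trans hyv.symm
    exact_mod_cast h2
  refine ⟨⟨?_, ?_⟩, ?_⟩
  · intro i
    have h1 := hxc i
    have h2 := hyc i
    have hs := hsum (MILP.A G i)
    show senseRel _ (∑ k, MILP.A G i k * ((x k + y k) / 2)) _
    rw [hs]
    unfold senseRel at h1 h2 ⊢
    split_ifs at h1 h2 ⊢ <;> linarith
  · intro k
    exact ⟨loSat_mid (hxb k).1 (hyb k).1, hiSat_mid (hxb k).2 (hyb k).2⟩
  · show ((∑ k, MILP.c G k * ((x k + y k) / 2) : ℝ) : EReal) = fstar G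
    rw [hsum (MILP.c G), ← hvxy, add_self_div_two]
    exact hxv

lemma isMinNormOpt_unique {G : MILP m n} {x y : Fin n → ℝ}
    (hx : IsMinNormOpt G x) (hy : IsMinNormOpt G y) : x = y := by
  have hmid := isOptSol_midpoint hx.1 hy.1
  have h1 : euclNorm x ≤ euclNorm (fun k => (x k + y k) / 2) := hx.2 _ hmid
  have h2 : euclNorm x ≤ euclNorm y := hx.2 y hy.1
  have h3 : euclNorm y ≤ euclNorm x := hy.2 x hx.1
  have hnn : ∀ z : Fin n → ℝ, (0:ℝ) ≤ ∑ k, z k ^ 2 :=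
    fun z => Finset.sum_nonneg fun k _ => sq_nonneg _
  have hsq : ∀ z : Fin n → ℝ, euclNorm z ^ 2 = ∑ k, z k ^ 2 :=
    fun z => Real.sq_sqrt (hnn z)
  have hxy : (∑ k, x k ^ 2) = ∑ k, y k ^ 2 := by
    rw [← hsq x, ← hsq y, le_antisymm h2 h3]
  have hxm : (∑ k, x k ^ 2) ≤ ∑ k, ((x k + y k) / 2) ^ 2 := by
    rw [← hsq x, ← hsq (fun k => (x k + y k) / 2)]
    exact pow_le_pow_left₀ (Real.sqrt_nonneg _) h1 2
  have hmidsq : ∑ k, ((x k + y k) / 2) ^ 2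
      = ((∑ k, x k ^ 2) + ∑ k, y k ^ 2) / 2 - (∑ k, (x k - y k) ^ 2) / 4 := by
    rw [← Finset.sum_add_distrib, Finset.sum_div, Finset.sum_div, ← Finset.sum_sub_distrib]
    exact Finset.sum_congr rfl fun k _ => by ring
  have hz : (∑ k, (x k - y k) ^ 2) ≤ 0 := by
    rw [hmidsq, ← hxy] at hxm
    linarith
  have hz0 : ∀ k ∈ Finset.univ, (x k - y k) ^ 2 = 0 := by
    rw [← Finset.sum_eq_zero_iff_of_nonneg fun k _ => sq_nonneg (x k - y k)]
    exact le_antisymm hz (hnn fun k => x k - y k)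
  funext k
  have := hz0 k (Finset.mem_univ k)
  have h4 := pow_eq_zero_iff (n := 2) (by norm_num) |>.1 this
  linarith [sub_eq_zero.1 h4]

lemma xstar_anchor_eq {G H : MILP m n} {j : Fin n} (hE : FWLEquivW G H)
    (hG : ∃ z, IsMinNormOpt G z) (hH : ∃ z, IsMinNormOpt H z) :
    xstar G j = xstar H j := by
  rw [xstar, dif_pos hG, xstar, dif_pos hH]
  have hxG : IsMinNormOpt G hG.choose := hG.choose_spec
  have hxH : IsMinNormOpt H hH.choose := hH.choose_spec
  set xG := hG.choose
  set xH := hH.choose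
  set xb := yavg G H j xG with hxbdef
  set yb := yavg H G j xH with hybdef
  have hopt : IsOptSol H xb := isOptSol_yavg hE hxG.1
  have hopt' : IsOptSol G yb := isOptSol_yavg hE.symm hxH.1
  have h1 : euclNorm xb ≤ euclNorm xG := Real.sqrt_le_sqrt (sum_sq_yavg_cross hE xG)
  have h2 : euclNorm yb ≤ euclNorm xH := Real.sqrt_le_sqrt (sum_sq_yavg_cross hE.symm xH)
  have h3 : euclNorm xG ≤ euclNorm yb := hxG.2 yb hopt'
  have h4 : euclNorm xH ≤ euclNorm xb := hxH.2 xb hopt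
  have heq : euclNorm xb = euclNorm xH := le_antisymm (by linarith) h4
  have hmin : IsMinNormOpt H xb := ⟨hopt, fun z hz => heq ▸ hxH.2 z hz⟩
  have hfin : xb = xH := isMinNormOpt_unique hmin hxH
  calc xG j = xb j := (yavg_apply_anchor hE xG).symm
  _ = xH j := by rw [hfin]

lemma branchDown_eq {G H : MILP m n} {j : Fin n} (hE : FWLEquivW G H)
    (hG : ∃ z, IsMinNormOpt G z) (hH : ∃ z, IsMinNormOpt H z) :
    branchDown G j = branchDown H j := by
  rw [branchDown, branchDown, xstar_anchor_eq hE hG hH, (lohij_eq hE).2.1]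
  exact lpValMod_eq hE _ _

lemma branchUp_eq {G H : MILP m n} {j : Fin n} (hE : FWLEquivW G H)
    (hG : ∃ z, IsMinNormOpt G z) (hH : ∃ z, IsMinNormOpt H z) :
    branchUp G j = branchUp H j := by
  rw [branchUp, branchUp, xstar_anchor_eq hE hG hH, (lohij_eq hE).2.2.1]
  exact lpValMod_eq hE _ _

end Values


/-- Two MILP instances with real-valued SB scores that satisfy
`G ∼₂^W Ḡ` have equal SB scores. -/
theorem SB_eq_of_fwlEquivW
    {m n : ℕ} (G H : MILP m n)
    (hSBG : SBRealValued G) (hSBH : SBRealValued H)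
    (h : FWLEquivW G H) :
    SB G = SB H := by
  funext j
  show SB G j = SB H j
  unfold SB
  rw [(lohij_eq (j := j) h).2.2.2, branchDown_eq (j := j) h hSBG.1 hSBH.1,
    branchUp_eq (j := j) h hSBG.1 hSBH.1, fstar_eq j h]
end
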